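/- For every positive integer k, Σ_{n=1}^{∞} (ζ(2n)/(n·4^n)) · (1 − 1/4^n) · C(2n, 2k) = (ζ(2k)/(2k)) · (1 − 1/4^k), where C(2n, 2k) denotes the binomial coefficient. -/

import Mathlib

open Real

/-- Real Riemann zeta values via the series `∑ 1/k^m`. -/
noncomputable def zetaR (m : ℕ) : ℝ := ∑' k : ℕ, 1 / ((k : ℝ) + 1) ^ m

lemma choose_id (k j : ℕ) (hk : 0 < k) :
    2 * (k + j) * Nat.choose (2 * j + (2 * k - 1)) (2 * k - 1) =
      Nat.choose (2 * (k + j)) (2 * k) * (2 * k) := by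
  have h : Nat.succ (2 * j + (2 * k - 1)) * Nat.choose (2 * j + (2 * k - 1)) (2 * k - 1) =
      Nat.choose (Nat.succ (2 * j + (2 * k - 1))) (Nat.succ (2 * k - 1)) * Nat.succ (2 * k - 1) :=
    Nat.add_one_mul_choose_eq (2 * j + (2 * k - 1)) (2 * k - 1)
  have h1 : Nat.succ (2 * j + (2 * k - 1)) = 2 * (k + j) := by omega
  have h2 : Nat.succ (2 * k - 1) = 2 * k := by omega
  rw [h1, h2] at h
  exact h

lemma keyG (k : ℕ) (hk : 0 < k) {t : ℝ} (ht : |t| < 1) :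
    HasSum (fun n : ℕ => ((2 * (n + 1)).choose (2 * k) : ℝ) / (n + 1) * t ^ (2 * (n + 1)))
      (1 / (2 * k) * ((t / (1 - t)) ^ (2 * k) + (t / (1 + t)) ^ (2 * k))) := by
  have h2k : (2 * k - 1) + 1 = 2 * k := by omega
  have hnt : ‖t‖ < 1 := by rwa [Real.norm_eq_abs]
  have hnt' : ‖-t‖ < 1 := by rwa [norm_neg]
  have h1 : HasSum (fun j : ℕ => ((j + (2 * k - 1)).choose (2 * k - 1) : ℝ) * t ^ j)
      (1 / (1 - t) ^ (2 * k)) := by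
    have := hasSum_choose_mul_geometric_of_norm_lt_one (𝕜 := ℝ) (2 * k - 1) hnt
    rwa [h2k] at this
  have h2 : HasSum (fun j : ℕ => ((j + (2 * k - 1)).choose (2 * k - 1) : ℝ) * (-t) ^ j)
      (1 / (1 + t) ^ (2 * k)) := by
    have := hasSum_choose_mul_geometric_of_norm_lt_one (𝕜 := ℝ) (2 * k - 1) hnt'
    rw [h2k, sub_neg_eq_add] at this
    exact this
  have h3 := ((h1.mul_right (t ^ (2 * k))).add (h2.mul_right (t ^ (2 * k)))).mul_left
      (1 / (2 * k : ℝ))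
  set f : ℕ → ℝ := fun j => 1 / (2 * k : ℝ) *
    (((j + (2 * k - 1)).choose (2 * k - 1) : ℝ) * t ^ j * t ^ (2 * k) +
      ((j + (2 * k - 1)).choose (2 * k - 1) : ℝ) * (-t) ^ j * t ^ (2 * k)) with hf
  have hval : 1 / (2 * k : ℝ) * (1 / (1 - t) ^ (2 * k) * t ^ (2 * k) +
      1 / (1 + t) ^ (2 * k) * t ^ (2 * k)) =
      1 / (2 * k) * ((t / (1 - t)) ^ (2 * k) + (t / (1 + t)) ^ (2 * k)) := by
    rw [div_pow, div_pow]; ring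
  rw [hval] at h3
  -- extract even terms
  have hinj2 : Function.Injective (fun j : ℕ => 2 * j) := by
    intro a b h; simp only [] at h; omega
  have hvan : ∀ x ∉ Set.range (fun j : ℕ => 2 * j), f x = 0 := by
    intro x hx
    have hodd : Odd x := by
      rcases Nat.even_or_odd x with he | ho
      · obtain ⟨r, hr⟩ := he
        exact absurd ⟨r, by simp only []; omega⟩ hx
      · exact ho
    simp only [hf, hodd.neg_pow]
    ring
  have h4 : HasSum (fun j : ℕ => f (2 * j))
      (1 / (2 * k) * ((t / (1 - t)) ^ (2 * k) + (t / (1 + t)) ^ (2 * k))) :=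
    (hinj2.hasSum_iff hvan).2 h3
  -- reindex
  set g : ℕ → ℝ := fun n => ((2 * (n + 1)).choose (2 * k) : ℝ) / (n + 1) * t ^ (2 * (n + 1))
    with hg
  have hinj : Function.Injective (fun j : ℕ => k - 1 + j) := by
    intro a b h; simp only [] at h; omega
  have hvan' : ∀ x ∉ Set.range (fun j : ℕ => k - 1 + j), g x = 0 := by
    intro x hx
    have hlt : x + 1 < k := by
      by_contra hc
      exact hx ⟨x - (k - 1), by simp only []; omega⟩
    have hch : (2 * (x + 1)).choose (2 * k) = 0 := Nat.choose_eq_zero_of_lt (by omega)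
    simp [hg, hch]
  have hcomp : (fun j : ℕ => g (k - 1 + j)) = fun j : ℕ => f (2 * j) := by
    funext j
    have hk1 : k - 1 + j + 1 = k + j := by omega
    have hpow : (-t) ^ (2 * j) = t ^ (2 * j) := Even.neg_pow ⟨j, by ring⟩ t
    have hidR : (2 * ((k : ℝ) + j)) * ((2 * j + (2 * k - 1)).choose (2 * k - 1) : ℝ) =
        ((2 * (k + j)).choose (2 * k) : ℝ) * (2 * k) := by
      exact_mod_cast choose_id k j hk
    have hc : ((k - 1 + j : ℕ) : ℝ) + 1 = (k : ℝ) + j := by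
      have h' : ((k - 1 + j + 1 : ℕ) : ℝ) = ((k + j : ℕ) : ℝ) := by rw [hk1]
      push_cast at h' ⊢
      linarith
    simp only [hg, hf, hk1, hpow, hc]
    have hkj : ((k : ℝ) + j) ≠ 0 := by positivity
    have hkk : (2 * (k : ℝ)) ≠ 0 := by positivity
    have hT : t ^ (2 * (k + j)) = t ^ (2 * j) * t ^ (2 * k) := by
      rw [← pow_add]; congr 1; omega
    have hnum : ((2 * (k + j)).choose (2 * k) : ℝ) / ((k : ℝ) + j) =
        2 * ((2 * j + (2 * k - 1)).choose (2 * k - 1) : ℝ) / (2 * k) := by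
      rw [div_eq_div_iff hkj hkk]
      linear_combination -hidR
    rw [hT, hnum]
    ring
  rw [← hcomp] at h4
  exact (hinj.hasSum_iff hvan').1 h4



lemma summable_aux {p : ℕ} (hp : 2 ≤ p) :
    Summable (fun j : ℕ => 1 / ((j : ℝ) + 1) ^ p) := by
  have h := summable_one_div_nat_pow.2 (by omega : 1 < p)
  have h2 := (summable_nat_add_iff 1).2 h
  simpa using h2

lemma zetaR_hasSum {p : ℕ} (hp : 2 ≤ p) :
    HasSum (fun j : ℕ => 1 / ((j : ℝ) + 1) ^ p) (zetaR p) :=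
  (summable_aux hp).hasSum

lemma aux1 {y : ℝ} (hy : 1 < y) : (1 / y) / (1 - 1 / y) = 1 / (y - 1) := by
  have h0 : y ≠ 0 := by linarith
  have h2 : 1 - 1 / y ≠ 0 := by
    have : 1 / y < 1 := by rw [div_lt_one (by linarith)]; linarith
    intro h; linarith [this]
  field_simp

lemma aux2 {y : ℝ} (hy : 0 < y) : (1 / y) / (1 + 1 / y) = 1 / (y + 1) := by
  have h0 : y ≠ 0 := ne_of_gt hy
  have h2 : 1 + 1 / y ≠ 0 := by positivity
  field_simp

lemma pow_half_combine {x : ℝ} (e : ℕ) : (1 / 2 : ℝ) ^ e * (1 / x ^ e) = 1 / (2 * x) ^ e := by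
  rw [div_pow, one_pow, div_mul_div_comm, one_mul, ← mul_pow]

lemma pow_quarter_combine {x : ℝ} (e : ℕ) : (1 / 4 : ℝ) ^ e * (1 / x ^ e) = 1 / (4 * x) ^ e := by
  rw [div_pow, one_pow, div_mul_div_comm, one_mul, ← mul_pow]

lemma odd_hasSum {p : ℕ} (hp : 2 ≤ p) :
    HasSum (fun m : ℕ => 1 / (2 * (m : ℝ) + 1) ^ p) ((1 - (1 / 2 : ℝ) ^ p) * zetaR p) := by
  have hζ := zetaR_hasSum hp
  have hinj : Function.Injective (fun m : ℕ => 2 * m) := by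
    intro u v h; simp only [] at h; omega
  have hsub : Summable ((fun j : ℕ => 1 / ((j : ℝ) + 1) ^ p) ∘ (fun m : ℕ => 2 * m)) :=
    (summable_aux hp).comp_injective hinj
  have hA := hsub.hasSum
  have hOddPart : HasSum (fun m : ℕ => 1 / (((2 * m + 1 : ℕ) : ℝ) + 1) ^ p)
      ((1 / 2 : ℝ) ^ p * zetaR p) := by
    have h := hζ.mul_left ((1 / 2 : ℝ) ^ p)
    have hfe : (fun m : ℕ => (1 / 2 : ℝ) ^ p * (1 / ((m : ℝ) + 1) ^ p)) =
        fun m : ℕ => 1 / (((2 * m + 1 : ℕ) : ℝ) + 1) ^ p := by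
      funext m
      have hcast : (((2 * m + 1 : ℕ) : ℝ) + 1) = 2 * ((m : ℝ) + 1) := by push_cast; ring
      rw [hcast, ← pow_half_combine]
    rw [hfe] at h
    exact h
  have htot : HasSum (fun j : ℕ => 1 / ((j : ℝ) + 1) ^ p)
      ((∑' m : ℕ, ((fun j : ℕ => 1 / ((j : ℝ) + 1) ^ p) ∘ (fun m : ℕ => 2 * m)) m) +
        (1 / 2 : ℝ) ^ p * zetaR p) := by
    refine HasSum.even_add_odd ?_ ?_
    · exact hA
    · exact hOddPart
  have h' := hζ.unique htot
  have hAval : (∑' m : ℕ, ((fun j : ℕ => 1 / ((j : ℝ) + 1) ^ p) ∘ (fun m : ℕ => 2 * m)) m) =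
      (1 - (1 / 2 : ℝ) ^ p) * zetaR p := by
    rw [sub_mul, one_mul]
    linarith
  rw [hAval] at hA
  have hfe2 : ((fun j : ℕ => 1 / ((j : ℝ) + 1) ^ p) ∘ (fun m : ℕ => 2 * m)) =
      fun m : ℕ => 1 / (2 * (m : ℝ) + 1) ^ p := by
    funext m
    simp only [Function.comp]
    push_cast
    ring_nf
  rwa [hfe2] at hA

lemma rowHasSum (k : ℕ) (hk : 0 < k) (m : ℕ) :
    HasSum (fun n : ℕ => ((2 * (n + 1)).choose (2 * k) : ℝ) / ((n : ℝ) + 1) *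
        (1 / (2 * ((m : ℝ) + 1))) ^ (2 * (n + 1)) -
        ((2 * (n + 1)).choose (2 * k) : ℝ) / ((n : ℝ) + 1) *
        (1 / (4 * ((m : ℝ) + 1))) ^ (2 * (n + 1)))
      (1 / (2 * (k : ℝ)) * (1 / (2 * (m : ℝ) + 1) ^ (2 * k) + 1 / (2 * (m : ℝ) + 3) ^ (2 * k))
        - 1 / (2 * (k : ℝ)) * (1 / (4 * (m : ℝ) + 3) ^ (2 * k) + 1 / (4 * (m : ℝ) + 5) ^ (2 * k))) := by
  have hM : (0 : ℝ) ≤ (m : ℝ) := Nat.cast_nonneg m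
  have h2 : (1 : ℝ) < 2 * ((m : ℝ) + 1) := by linarith
  have h4 : (1 : ℝ) < 4 * ((m : ℝ) + 1) := by linarith
  have ht1 : |1 / (2 * ((m : ℝ) + 1))| < 1 := by
    rw [abs_of_pos (by positivity), div_lt_one (by positivity)]; linarith
  have ht2 : |1 / (4 * ((m : ℝ) + 1))| < 1 := by
    rw [abs_of_pos (by positivity), div_lt_one (by positivity)]; linarith
  have h := (keyG k hk ht1).sub (keyG k hk ht2)
  have e1 : (1 / (2 * ((m : ℝ) + 1)) / (1 - 1 / (2 * ((m : ℝ) + 1)))) ^ (2 * k) =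
      1 / (2 * (m : ℝ) + 1) ^ (2 * k) := by
    rw [aux1 h2, ← one_div_pow]
    norm_num
    ring_nf
  have e2 : (1 / (2 * ((m : ℝ) + 1)) / (1 + 1 / (2 * ((m : ℝ) + 1)))) ^ (2 * k) =
      1 / (2 * (m : ℝ) + 3) ^ (2 * k) := by
    rw [aux2 (by positivity), ← one_div_pow]
    norm_num
    ring_nf
  have e3 : (1 / (4 * ((m : ℝ) + 1)) / (1 - 1 / (4 * ((m : ℝ) + 1)))) ^ (2 * k) =
      1 / (4 * (m : ℝ) + 3) ^ (2 * k) := by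
    rw [aux1 h4, ← one_div_pow]
    norm_num
    ring_nf
  have e4 : (1 / (4 * ((m : ℝ) + 1)) / (1 + 1 / (4 * ((m : ℝ) + 1)))) ^ (2 * k) =
      1 / (4 * (m : ℝ) + 5) ^ (2 * k) := by
    rw [aux2 (by positivity), ← one_div_pow]
    norm_num
    ring_nf
  rw [e1, e2, e3, e4] at h
  have hval : 1 / (2 * (k : ℝ)) * (1 / (2 * (m : ℝ) + 1) ^ (2 * k) + 1 / (2 * (m : ℝ) + 3) ^ (2 * k))
      - 1 / (2 * (k : ℝ)) * (1 / (4 * (m : ℝ) + 3) ^ (2 * k) + 1 / (4 * (m : ℝ) + 5) ^ (2 * k)) =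
      1 / (2 * (k : ℝ)) * (1 / (2 * (m : ℝ) + 1) ^ (2 * k) + 1 / (2 * (m : ℝ) + 3) ^ (2 * k))
      - 1 / (2 * (k : ℝ)) * (1 / (4 * (m : ℝ) + 3) ^ (2 * k) + 1 / (4 * (m : ℝ) + 5) ^ (2 * k)) := rfl
  exact h

lemma colHasSum (k n : ℕ) :
    HasSum (fun m : ℕ => ((2 * (n + 1)).choose (2 * k) : ℝ) / ((n : ℝ) + 1) *
        (1 / (2 * ((m : ℝ) + 1))) ^ (2 * (n + 1)) -
        ((2 * (n + 1)).choose (2 * k) : ℝ) / ((n : ℝ) + 1) *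
        (1 / (4 * ((m : ℝ) + 1))) ^ (2 * (n + 1)))
      (zetaR (2 * (n + 1)) / (((n : ℝ) + 1) * 4 ^ (n + 1)) * (1 - 1 / 4 ^ (n + 1)) *
        ((2 * (n + 1)).choose (2 * k) : ℝ)) := by
  have hp : 2 ≤ 2 * (n + 1) := by omega
  have hζ := zetaR_hasSum hp
  have h := ((hζ.mul_left ((1 / 2 : ℝ) ^ (2 * (n + 1)))).mul_left
      (((2 * (n + 1)).choose (2 * k) : ℝ) / ((n : ℝ) + 1))).sub
    ((hζ.mul_left ((1 / 4 : ℝ) ^ (2 * (n + 1)))).mul_left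
      (((2 * (n + 1)).choose (2 * k) : ℝ) / ((n : ℝ) + 1)))
  have hfe : ∀ m : ℕ,
      ((2 * (n + 1)).choose (2 * k) : ℝ) / ((n : ℝ) + 1) *
        ((1 / 2 : ℝ) ^ (2 * (n + 1)) * (1 / ((m : ℝ) + 1) ^ (2 * (n + 1)))) -
      ((2 * (n + 1)).choose (2 * k) : ℝ) / ((n : ℝ) + 1) *
        ((1 / 4 : ℝ) ^ (2 * (n + 1)) * (1 / ((m : ℝ) + 1) ^ (2 * (n + 1)))) =
      ((2 * (n + 1)).choose (2 * k) : ℝ) / ((n : ℝ) + 1) *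
        (1 / (2 * ((m : ℝ) + 1))) ^ (2 * (n + 1)) -
      ((2 * (n + 1)).choose (2 * k) : ℝ) / ((n : ℝ) + 1) *
        (1 / (4 * ((m : ℝ) + 1))) ^ (2 * (n + 1)) := by
    intro m
    rw [one_div_pow (2 * ((m : ℝ) + 1)), one_div_pow (4 * ((m : ℝ) + 1)),
      ← pow_half_combine, ← pow_quarter_combine]
  have hval : ((2 * (n + 1)).choose (2 * k) : ℝ) / ((n : ℝ) + 1) *
        ((1 / 2 : ℝ) ^ (2 * (n + 1)) * zetaR (2 * (n + 1))) -
      ((2 * (n + 1)).choose (2 * k) : ℝ) / ((n : ℝ) + 1) *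
        ((1 / 4 : ℝ) ^ (2 * (n + 1)) * zetaR (2 * (n + 1))) =
      zetaR (2 * (n + 1)) / (((n : ℝ) + 1) * 4 ^ (n + 1)) * (1 - 1 / 4 ^ (n + 1)) *
        ((2 * (n + 1)).choose (2 * k) : ℝ) := by
    have key2 : (1 / 2 : ℝ) ^ (2 * (n + 1)) = 1 / 4 ^ (n + 1) := by
      rw [show 2 * (n + 1) = (n + 1) + (n + 1) by ring, pow_add, ← mul_pow]
      norm_num
      simp [one_div, inv_pow]
    have key4 : (1 / 4 : ℝ) ^ (2 * (n + 1)) = 1 / 4 ^ (n + 1) * (1 / 4 ^ (n + 1)) := by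
      rw [show 2 * (n + 1) = (n + 1) + (n + 1) by ring, pow_add]
      norm_num
      simp [one_div, inv_pow]
    have hN : ((n : ℝ) + 1) ≠ 0 := by positivity
    have h4p : ((4 : ℝ)) ^ (n + 1) ≠ 0 := by positivity
    rw [key2, key4]
    field_simp
  rw [funext hfe, hval] at h
  exact h

lemma key2k (k : ℕ) : (1 / 2 : ℝ) ^ (2 * k) = 1 / 4 ^ k := by
  rw [pow_mul]
  norm_num
  simp [one_div, inv_pow]

lemma BHasSum (k : ℕ) (hk : 0 < k) :
    HasSum (fun m : ℕ =>
      1 / (2 * (k : ℝ)) * (1 / (2 * (m : ℝ) + 1) ^ (2 * k) + 1 / (2 * (m : ℝ) + 3) ^ (2 * k))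
        - 1 / (2 * (k : ℝ)) * (1 / (4 * (m : ℝ) + 3) ^ (2 * k) + 1 / (4 * (m : ℝ) + 5) ^ (2 * k)))
      (zetaR (2 * k) / (2 * (k : ℝ)) * (1 - 1 / 4 ^ k)) := by
  have hp : 2 ≤ 2 * k := by omega
  have hO := odd_hasSum hp
  have hinjQ : Function.Injective (fun j : ℕ => 2 * j + 2) := by
    intro u v h; simp only [] at h; omega
  have hsubQ : Summable ((fun j : ℕ => 1 / ((j : ℝ) + 1) ^ (2 * k)) ∘ fun j : ℕ => 2 * j + 2) :=
    (summable_aux hp).comp_injective hinjQ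
  set gQ : ℕ → ℝ := (fun j : ℕ => 1 / ((j : ℝ) + 1) ^ (2 * k)) ∘ (fun j : ℕ => 2 * j + 2)
    with hgQ
  have hQ := hsubQ.hasSum
  have hinj2 : Function.Injective (fun j : ℕ => 2 * j) := by
    intro u v h; simp only [] at h; omega
  have hinj21 : Function.Injective (fun j : ℕ => 2 * j + 1) := by
    intro u v h; simp only [] at h; omega
  have hQe := (hsubQ.comp_injective hinj2).hasSum
  have hQo := (hsubQ.comp_injective hinj21).hasSum
  have htotQ : HasSum gQ ((∑' j : ℕ, (gQ ∘ fun j : ℕ => 2 * j) j) +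
      (∑' j : ℕ, (gQ ∘ fun j : ℕ => 2 * j + 1) j)) := by
    refine HasSum.even_add_odd ?_ ?_
    · exact hQe
    · exact hQo
  have hQeo : HasSum (fun m : ℕ => (gQ ∘ fun j : ℕ => 2 * j) m + (gQ ∘ fun j : ℕ => 2 * j + 1) m)
      (∑' j : ℕ, gQ j) := by
    rw [hQ.unique htotQ]
    exact hQe.add hQo
  have h := ((hO.add hQ).sub hQeo).mul_left (1 / (2 * (k : ℝ)))
  have hfe : ∀ m : ℕ, 1 / (2 * (k : ℝ)) *
      ((1 / (2 * (m : ℝ) + 1) ^ (2 * k) + gQ m) -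
        ((gQ ∘ fun j : ℕ => 2 * j) m + (gQ ∘ fun j : ℕ => 2 * j + 1) m)) =
      1 / (2 * (k : ℝ)) * (1 / (2 * (m : ℝ) + 1) ^ (2 * k) + 1 / (2 * (m : ℝ) + 3) ^ (2 * k))
        - 1 / (2 * (k : ℝ)) *
          (1 / (4 * (m : ℝ) + 3) ^ (2 * k) + 1 / (4 * (m : ℝ) + 5) ^ (2 * k)) := by
    intro m
    have c1 : gQ m = 1 / (2 * (m : ℝ) + 3) ^ (2 * k) := by
      simp only [hgQ, Function.comp_apply]
      push_cast
      ring_nf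
    have c2 : (gQ ∘ fun j : ℕ => 2 * j) m = 1 / (4 * (m : ℝ) + 3) ^ (2 * k) := by
      simp only [hgQ, Function.comp_apply]
      push_cast
      ring_nf
    have c3 : (gQ ∘ fun j : ℕ => 2 * j + 1) m = 1 / (4 * (m : ℝ) + 5) ^ (2 * k) := by
      simp only [hgQ, Function.comp_apply]
      push_cast
      ring_nf
    rw [c1, c2, c3]
    ring
  have hval : 1 / (2 * (k : ℝ)) *
      (((1 - (1 / 2 : ℝ) ^ (2 * k)) * zetaR (2 * k) + ∑' j : ℕ, gQ j) - ∑' j : ℕ, gQ j) =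
      zetaR (2 * k) / (2 * (k : ℝ)) * (1 - 1 / 4 ^ k) := by
    rw [key2k]
    ring
  rw [funext hfe, hval] at h
  exact h

theorem zeta_binom_diff_even (k : ℕ) (hk : 0 < k) :
    ∑' n : ℕ, zetaR (2 * (n + 1)) / (((n : ℝ) + 1) * 4 ^ (n + 1)) *
      (1 - 1 / 4 ^ (n + 1)) * (Nat.choose (2 * (n + 1)) (2 * k) : ℝ) =
      (zetaR (2 * k) / (2 * (k : ℝ))) * (1 - 1 / 4 ^ k) := by
  set a : ℕ → ℕ → ℝ := fun m n => ((2 * (n + 1)).choose (2 * k) : ℝ) / ((n : ℝ) + 1) *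
        (1 / (2 * ((m : ℝ) + 1))) ^ (2 * (n + 1)) -
        ((2 * (n + 1)).choose (2 * k) : ℝ) / ((n : ℝ) + 1) *
        (1 / (4 * ((m : ℝ) + 1))) ^ (2 * (n + 1)) with ha
  have hrow : ∀ m : ℕ, HasSum (a m)
      (1 / (2 * (k : ℝ)) * (1 / (2 * (m : ℝ) + 1) ^ (2 * k) + 1 / (2 * (m : ℝ) + 3) ^ (2 * k))
        - 1 / (2 * (k : ℝ)) *
          (1 / (4 * (m : ℝ) + 3) ^ (2 * k) + 1 / (4 * (m : ℝ) + 5) ^ (2 * k))) :=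
    fun m => rowHasSum k hk m
  have hcol : ∀ n : ℕ, HasSum (fun m => a m n)
      (zetaR (2 * (n + 1)) / (((n : ℝ) + 1) * 4 ^ (n + 1)) * (1 - 1 / 4 ^ (n + 1)) *
        ((2 * (n + 1)).choose (2 * k) : ℝ)) := fun n => colHasSum k n
  have hB := BHasSum k hk
  have hnn : ∀ m n : ℕ, 0 ≤ a m n := by
    intro m n
    rw [ha]
    have hM : (0 : ℝ) ≤ (m : ℝ) := Nat.cast_nonneg m
    have hle : 1 / (4 * ((m : ℝ) + 1)) ≤ 1 / (2 * ((m : ℝ) + 1)) := by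
      apply one_div_le_one_div_of_le (by positivity)
      linarith
    have hle2 : (1 / (4 * ((m : ℝ) + 1))) ^ (2 * (n + 1)) ≤
        (1 / (2 * ((m : ℝ) + 1))) ^ (2 * (n + 1)) :=
      pow_le_pow_left₀ (by positivity) hle (2 * (n + 1))
    have hc : (0 : ℝ) ≤ ((2 * (n + 1)).choose (2 * k) : ℝ) / ((n : ℝ) + 1) := by positivity
    nlinarith
  have hsum : Summable (Function.uncurry a) := by
    rw [summable_prod_of_nonneg (by intro p; exact hnn p.1 p.2)]
    refine ⟨fun m => (hrow m).summable, ?_⟩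
    exact hB.summable.congr (fun m => ((hrow m).tsum_eq).symm)
  have hLHS : ∑' n : ℕ, zetaR (2 * (n + 1)) / (((n : ℝ) + 1) * 4 ^ (n + 1)) *
      (1 - 1 / 4 ^ (n + 1)) * (Nat.choose (2 * (n + 1)) (2 * k) : ℝ) =
      ∑' n : ℕ, ∑' m : ℕ, a m n :=
    tsum_congr fun n => ((hcol n).tsum_eq).symm
  rw [hLHS, Summable.tsum_comm' hsum (fun m => (hrow m).summable) (fun n => (hcol n).summable),
    tsum_congr (fun m => (hrow m).tsum_eq)]
  exact hB.tsum_eq
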